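/- Let 0 < ε < 1, ρ > 0, ρ* = (1 + ε/2)ρ, μ ≤ ερ/6, and let d° satisfy (1−ε/6)d ≤ d° ≤ (1+ε/6)d. For curves P, Q in a metric space, if the perceived discrete Fréchet distance D_F°(P^μ, Q) ≤ ρ*, then D_F(P, Q) ≤ (1+ε)ρ. -/

import Mathlib

open scoped BigOperators

namespace Frechet

variable {X : Type*}

/-- A single step of a monotone discrete walk: each coordinate increases by 0 or 1,
and not both stay the same. -/
def IsStep (a b : ℕ × ℕ) : Prop :=
  (b.1 = a.1 ∨ b.1 = a.1 + 1) ∧ (b.2 = a.2 ∨ b.2 = a.2 + 1) ∧ b ≠ a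

/-- A monotone discrete walk from (0,0) to (n-1, m-1) in the n × m lattice
(0-indexed version of a walk from (1,1) to (n,m)). -/
def IsWalk (n m : ℕ) (F : List (ℕ × ℕ)) : Prop :=
  F ≠ [] ∧ F.head? = some (0, 0) ∧ F.getLast? = some (n - 1, m - 1) ∧
    F.Chain' IsStep ∧ ∀ p ∈ F, p.1 < n ∧ p.2 < m

/-- Cost of a walk: the maximum matched distance along it. -/
def walkCost (d : X → X → ℝ) (P Q : ℕ → X) (F : List (ℕ × ℕ)) : ℝ :=
  (F.map fun p => d (P p.1) (Q p.2)).foldr max 0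

/-- Discrete Fréchet distance between `P` (first `n` points) and `Q` (first `m` points),
computed with respect to the distance-like function `d`. -/
noncomputable def dF (d : X → X → ℝ) (P : ℕ → X) (n : ℕ) (Q : ℕ → X) (m : ℕ) : ℝ :=
  sInf {c | ∃ F, IsWalk n m F ∧ walkCost d P Q F = c}

/-- Arc length of the polygonal curve `P` between vertex indices `i` and `j`. -/
def arcLen (d : X → X → ℝ) (P : ℕ → X) (i j : ℕ) : ℝ :=
  ∑ k ∈ Finset.Ico i j, d (P k) (P (k + 1))

/-- `S` is the list of indices of the greedy `μ`-simplification of the curve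
`P` with `n` vertices: it starts at vertex `0`, after a vertex `a` the next chosen
vertex `b` is the first one with arc length `> μ` (unless `b` is the final vertex
`n-1`, which is always appended), and it ends at vertex `n-1`. -/
def IsSimplification (d : X → X → ℝ) (P : ℕ → X) (n : ℕ) (μ : ℝ) (S : List ℕ) : Prop :=
  S.head? = some 0 ∧ S.getLast? = some (n - 1) ∧ S.Pairwise (· < ·) ∧
    (∀ a ∈ S, a < n) ∧
    S.Chain' (fun a b =>
      (∀ j, a < j → j < b → arcLen d P a j ≤ μ) ∧ (b = n - 1 ∨ μ < arcLen d P a b))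

/-- The subsequence of `P` selected by the index list `S`, as a curve. -/
def subCurve (P : ℕ → X) (S : List ℕ) : ℕ → X :=
  fun t => P (S.getD t 0)

/-- Discrete c-packedness of the polygonal curve `P` (first `n` vertices): for every
ball, the total length of the edges of `P` contained in the ball is at most `c`
times the radius. -/
def CPacked (d : X → X → ℝ) (P : ℕ → X) (n : ℕ) (c : ℝ) : Prop :=
  ∀ (x : X) (r : ℝ), 0 ≤ r →
    ∑ k ∈ Finset.range (n - 1),
      (if d (P k) x ≤ r ∧ d (P (k + 1)) x ≤ r then d (P k) (P (k + 1)) else 0) ≤ c * r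

/-- Directed discrete Hausdorff distance from `P` (first `n` points) to `Q`
(first `m` points). -/
noncomputable def dirHaus (d : X → X → ℝ) (P : ℕ → X) (n : ℕ) (Q : ℕ → X) (m : ℕ) : ℝ :=
  sSup {r | ∃ i < n, r = sInf {s | ∃ j < m, s = d (P i) (Q j)}}

/-- Discrete (symmetric) Hausdorff distance. -/
noncomputable def dHaus (d : X → X → ℝ) (P : ℕ → X) (n : ℕ) (Q : ℕ → X) (m : ℕ) : ℝ :=
  max (dirHaus d P n Q m) (dirHaus d Q m P n)

lemma foldr_max_nonneg (l : List ℝ) : 0 ≤ l.foldr max 0 := by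
  induction l with
  | nil => simp
  | cons a t ih => exact le_trans ih (le_max_right _ _)

lemma le_foldr_max {l : List ℝ} {x : ℝ} (hx : x ∈ l) : x ≤ l.foldr max 0 := by
  induction l with
  | nil => simp at hx
  | cons a t ih =>
    rcases List.mem_cons.mp hx with rfl | hx
    · exact le_max_left _ _
    · exact le_trans (ih hx) (le_max_right _ _)

lemma foldr_max_le {l : List ℝ} {B : ℝ} (hB : 0 ≤ B) (h : ∀ x ∈ l, x ≤ B) :
    l.foldr max 0 ≤ B := by
  induction l with
  | nil => simpa
  | cons a t ih =>
    exact max_le (h a (by simp)) (ih fun x hx => h x (List.mem_cons_of_mem _ hx))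

lemma chain'_map_range' {α : Type*} (R : α → α → Prop) (f : ℕ → α)
    (h : ∀ k, R (f k) (f (k+1))) :
    ∀ (len s : ℕ), List.Chain' R ((List.range' s len).map f)
  | 0, s => by simp [List.Chain']
  | 1, s => by simp [List.Chain']
  | (len+2), s => by
    rw [List.range'_succ, List.range'_succ, List.map_cons, List.map_cons]
    refine List.IsChain.cons_cons (h s) ?_
    rw [← List.map_cons, ← List.range'_succ]
    exact chain'_map_range' R f h (len+1) (s+1)


def expand (idx : ℕ → ℕ) : List (ℕ × ℕ) → List (ℕ × ℕ)
  | [] => []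
  | [a] => [(idx a.1, a.2)]
  | a :: b :: l => ((List.range' (idx a.1) (max (idx b.1 - idx a.1) 1)).map fun k => (k, a.2))
      ++ expand idx (b :: l)

lemma expand_ne_nil (idx : ℕ → ℕ) : ∀ {F : List (ℕ × ℕ)}, F ≠ [] → expand idx F ≠ []
  | [], h => absurd rfl h
  | [a], _ => by simp [expand]
  | a :: b :: l, _ => by
    simp only [expand, ne_eq, List.append_eq_nil_iff, not_and]
    intro h1
    simp [List.range'_eq_nil_iff] at h1

lemma head?_expand (idx : ℕ → ℕ) :
    ∀ (F : List (ℕ × ℕ)), (expand idx F).head? = F.head?.map (fun a => (idx a.1, a.2))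
  | [] => rfl
  | [a] => rfl
  | a :: b :: l => by
    simp only [expand, List.head?_append]
    have h1 : max (idx b.1 - idx a.1) 1 = (max (idx b.1 - idx a.1) 1 - 1) + 1 := by omega
    rw [h1, List.range'_succ]
    simp

lemma getLast?_expand (idx : ℕ → ℕ) :
    ∀ (F : List (ℕ × ℕ)), (expand idx F).getLast? = F.getLast?.map (fun a => (idx a.1, a.2))
  | [] => rfl
  | [a] => rfl
  | a :: b :: l => by
    have h2 := expand_ne_nil idx (F := b :: l) (by simp)
    simp only [expand]
    rw [List.getLast?_append_of_ne_nil _ h2, getLast?_expand idx (b :: l)]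
    rw [List.getLast?_cons_cons]


lemma getLast?_map_range' {α : Type*} (f : ℕ → α) (s len : ℕ) (h : 0 < len) :
    ((List.range' s len).map f).getLast? = some (f (s + len - 1)) := by
  obtain ⟨k, rfl⟩ : ∃ k, len = k + 1 := ⟨len - 1, by omega⟩
  rw [List.range'_concat, List.map_append]
  simp

lemma chain'_expand {L : ℕ} (idx : ℕ → ℕ) (hmono : ∀ i, i + 1 < L → idx i < idx (i + 1)) :
    ∀ {F : List (ℕ × ℕ)}, List.Chain' IsStep F → (∀ p ∈ F, p.1 < L) →
      List.Chain' IsStep (expand idx F)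
  | [], _, _ => by simp [expand, List.Chain']
  | [a], _, _ => by simp [expand, List.Chain']
  | a :: b :: l, hF, hb => by
    have hab : IsStep a b := List.isChain_cons_cons.mp hF |>.1
    have hIH : List.Chain' IsStep (expand idx (b :: l)) :=
      chain'_expand idx hmono (List.isChain_cons_cons.mp hF).2
        (fun p hp => hb p (List.mem_cons_of_mem _ hp))
    rw [expand]; unfold List.Chain'; rw [List.isChain_append]
    refine ⟨?_, hIH, ?_⟩
    · exact chain'_map_range' _ _ (fun k => ⟨Or.inr rfl, Or.inl rfl, by simp⟩) _ _
    · intro x hx y hy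
      rw [getLast?_map_range' _ _ _ (by omega)] at hx
      rw [head?_expand] at hy
      simp only [List.head?_cons, Option.map_some] at hy
      rw [Option.mem_def, Option.some_inj] at hx hy
      subst hx; subst hy
      rcases hab with ⟨h1, h2, h3⟩
      rcases h1 with h1 | h1
      · -- b.1 = a.1
        have hb2 : b.2 = a.2 + 1 := by
          rcases h2 with h2 | h2
          · exact absurd (Prod.ext h1 h2) h3
          · exact h2
        have : idx b.1 - idx a.1 = 0 := by rw [h1]; omega
        refine ⟨Or.inl ?_, Or.inr ?_, ?_⟩ <;> simp [this, h1, hb2]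
      · -- b.1 = a.1 + 1
        have hbL : b.1 < L := hb b (by simp)
        have hlt : idx a.1 < idx b.1 := by rw [h1]; exact hmono a.1 (h1 ▸ hbL)
        have hmax : max (idx b.1 - idx a.1) 1 = idx b.1 - idx a.1 := by omega
        refine ⟨Or.inr ?_, ?_, ?_⟩
        · simp only [hmax]; omega
        · rcases h2 with h2 | h2
          · exact Or.inl (by simp [h2])
          · exact Or.inr (by simp [h2])
        · simp only [ne_eq, Prod.mk.injEq, not_and, hmax]
          intro hc; omega

lemma mem_expand {L : ℕ} (idx : ℕ → ℕ) (hmono : ∀ i, i + 1 < L → idx i < idx (i + 1)) :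
    ∀ {F : List (ℕ × ℕ)} {q : ℕ × ℕ}, List.Chain' IsStep F → (∀ p ∈ F, p.1 < L) →
      q ∈ expand idx F →
      ∃ a ∈ F, q.2 = a.2 ∧ (q.1 = idx a.1 ∨
        (a.1 + 1 < L ∧ idx a.1 < q.1 ∧ q.1 < idx (a.1 + 1)))
  | [], q, _, _, hq => by simp [expand] at hq
  | [a], q, _, _, hq => by
    simp [expand] at hq
    exact ⟨a, by simp, by simp [hq], Or.inl (by simp [hq])⟩
  | a :: b :: l, q, hF, hb, hq => by
    rw [expand, List.mem_append] at hq
    rcases hq with hq | hq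
    · simp only [List.mem_map, List.mem_range'_1] at hq
      obtain ⟨k, ⟨hk1, hk2⟩, rfl⟩ := hq
      refine ⟨a, by simp, rfl, ?_⟩
      rcases (List.isChain_cons_cons.mp hF).1 with ⟨h1 | h1, _, _⟩
      · -- b.1 = a.1 : segment is a single point
        have : idx b.1 - idx a.1 = 0 := by rw [h1]; omega
        exact Or.inl (by omega)
      · have hbL : b.1 < L := hb b (by simp)
        have hlt : idx a.1 < idx b.1 := by rw [h1]; exact hmono a.1 (h1 ▸ hbL)
        have hmax : max (idx b.1 - idx a.1) 1 = idx b.1 - idx a.1 := by omega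
        rcases eq_or_lt_of_le hk1 with he | he
        · exact Or.inl he.symm
        · exact Or.inr ⟨h1 ▸ hbL, he, by rw [← h1]; omega⟩
    · obtain ⟨a', ha', h1, h2⟩ := mem_expand idx hmono (List.isChain_cons_cons.mp hF).2
        (fun p hp => hb p (List.mem_cons_of_mem _ hp)) hq
      exact ⟨a', List.mem_cons_of_mem _ ha', h1, h2⟩





lemma exists_walk (n m : ℕ) (hn : 0 < n) (hm : 0 < m) : ∃ F, IsWalk n m F := by
  obtain ⟨a, rfl⟩ : ∃ a, n = a + 1 := ⟨n - 1, by omega⟩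
  obtain ⟨b, rfl⟩ : ∃ b, m = b + 1 := ⟨m - 1, by omega⟩
  refine ⟨(List.range' 0 (a+1)).map (fun k => (k, 0)) ++
    (List.range' 1 b).map (fun j => (a, j)), ?_, ?_, ?_, ?_, ?_⟩
  · simp [List.range'_eq_nil_iff]
  · rw [List.head?_append]
    rw [List.range'_succ, List.map_cons]
    simp
  · rcases Nat.eq_zero_or_pos b with rfl | hb
    · simp only [List.range'_zero, List.map_nil, List.append_nil]
      rw [getLast?_map_range' _ _ _ (by omega)]
      simp
    · rw [List.getLast?_append_of_ne_nil _ (by simp [List.range'_eq_nil_iff]; omega)]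
      rw [getLast?_map_range' _ _ _ hb]
      congr 2
      omega
  · unfold List.Chain'; rw [List.isChain_append]
    refine ⟨chain'_map_range' _ _ (fun k => ⟨Or.inr rfl, Or.inl rfl, by simp⟩) _ _,
      chain'_map_range' _ _ (fun k => ⟨Or.inl rfl, Or.inr rfl, by simp⟩) _ _, ?_⟩
    intro x hx y hy
    rw [getLast?_map_range' _ _ _ (by omega)] at hx
    rcases Nat.eq_zero_or_pos b with rfl | hb
    · simp at hy
    · obtain ⟨b', rfl⟩ : ∃ b', b = b' + 1 := ⟨b - 1, by omega⟩
      rw [List.range'_succ, List.map_cons] at hy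
      simp only [List.head?_cons, Option.mem_def, Option.some_inj] at hx hy
      subst hx; subst hy
      exact ⟨Or.inl (by omega), Or.inr rfl, by simp⟩
  · intro p hp
    rw [List.mem_append] at hp
    rcases hp with hp | hp <;>
      (simp only [List.mem_map, List.mem_range'_1] at hp; obtain ⟨k, hk, rfl⟩ := hp) <;>
      simp <;> omega

lemma dist_le_arcLen {X : Type*} [MetricSpace X] (P : ℕ → X) {i j : ℕ} (h : i ≤ j) :
    dist (P i) (P j) ≤ ∑ k ∈ Finset.Ico i j, dist (P k) (P (k + 1)) := by
  induction j, h using Nat.le_induction with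
  | base => simp
  | succ j hij ih =>
    rw [Finset.sum_Ico_succ_top hij]
    calc dist (P i) (P (j+1)) ≤ dist (P i) (P j) + dist (P j) (P (j+1)) := dist_triangle _ _ _
    _ ≤ _ := by linarith


/-- if the perceived discrete Fréchet distance between the
`μ`-simplification `P^μ` and `Q` is at most `ρ* = (1+ε/2)ρ` (with `μ ≤ ερ/6` and a
`(1 ± ε/6)`-perceived distance `d'`), then `D_F(P, Q) ≤ (1+ε)ρ`. -/
theorem decision_yes {X : Type*} [MetricSpace X] (d' : X → X → ℝ)
    (ε ρ ρstar μ : ℝ) (hε0 : 0 < ε) (hε1 : ε < 1) (hρ : 0 < ρ)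
    (hρstar : ρstar = (1 + ε / 2) * ρ) (hμ0 : 0 ≤ μ) (hμ : μ ≤ ε * ρ / 6)
    (hd : ∀ x y, (1 - ε / 6) * dist x y ≤ d' x y ∧ d' x y ≤ (1 + ε / 6) * dist x y)
    (P : ℕ → X) (n : ℕ) (hn : 0 < n)
    (Q : ℕ → X) (m : ℕ) (hm : 0 < m)
    (S : List ℕ) (hS : IsSimplification dist P n μ S)
    (h : dF d' (subCurve P S) S.length Q m ≤ ρstar) :
    dF dist P n Q m ≤ (1 + ε) * ρ := by
  obtain ⟨hhead, hlast, hsort, hbnd, hchain⟩ := hS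
  set L := S.length with hL
  have hSne : S ≠ [] := by intro hc; rw [hc] at hhead; simp at hhead
  have hL0 : 0 < L := List.length_pos_iff.mpr hSne
  set idx : ℕ → ℕ := fun i => S.getD i 0 with hidx
  have hidxget : ∀ i (hi : i < L), idx i = S.get ⟨i, hi⟩ := by
    intro i hi
    rw [List.get_eq_getElem]
    exact List.getD_eq_getElem _ _ hi
  have hmono : ∀ i, i + 1 < L → idx i < idx (i + 1) := by
    intro i hi
    rw [hidxget i (by omega), hidxget (i+1) hi]
    exact List.pairwise_iff_get.mp hsort ⟨i, by omega⟩ ⟨i+1, hi⟩ (by simp)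
  have hidxlt : ∀ i, i < L → idx i < n := by
    intro i hi
    rw [hidxget i hi, List.get_eq_getElem]
    exact hbnd _ (List.getElem_mem _)
  have hidx0 : idx 0 = 0 := by
    cases S with
    | nil => simp at hhead
    | cons a t => simp at hhead; simp [hidx, hhead]
  have hidxlast : idx (L - 1) = n - 1 := by
    have := List.getLast?_eq_getLast hSne
    rw [this, Option.some_inj] at hlast
    rw [hidxget (L-1) (by omega), List.get_eq_getElem, ← List.getLast_eq_getElem hSne,
      hlast]
  have harc : ∀ i, i + 1 < L → ∀ j, idx i < j → j < idx (i + 1) →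
      arcLen dist P (idx i) j ≤ μ := by
    intro i hi j h1 h2
    have := (List.isChain_iff_getElem.mp hchain) i (by omega)
    have e1 := hidxget i (by omega); have e2 := hidxget (i+1) hi
    rw [List.get_eq_getElem] at e1 e2
    rw [← e1, ← e2] at this
    exact this.1 j h1 h2
  have hbdd : BddBelow {c | ∃ F, IsWalk L m F ∧ walkCost d' (subCurve P S) Q F = c} := by
    refine ⟨0, fun c hc => ?_⟩
    obtain ⟨F, _, rfl⟩ := hc
    exact foldr_max_nonneg _
  have hne : {c | ∃ F, IsWalk L m F ∧ walkCost d' (subCurve P S) Q F = c}.Nonempty := by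
    obtain ⟨F, hF⟩ := exists_walk L m hL0 hm
    exact ⟨_, F, hF, rfl⟩
  set B : ℝ := (1 - ε / 6) * ((1 + ε) * ρ - μ) with hB
  have hρB : ρstar < B := by rw [hρstar, hB]; nlinarith [mul_pos hε0 hρ, sq_nonneg ε]
  have hsinf : sInf {c | ∃ F, IsWalk L m F ∧ walkCost d' (subCurve P S) Q F = c} < B :=
    lt_of_le_of_lt h hρB
  obtain ⟨c, ⟨F, hFwalk, hFcost⟩, hcB⟩ := (csInf_lt_iff hbdd hne).mp hsinf
  obtain ⟨hFne, hFhead, hFlast, hFchain, hFbnd⟩ := hFwalk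
  have hF1 : ∀ p ∈ F, p.1 < L := fun p hp => (hFbnd p hp).1
  have helem : ∀ a ∈ F, d' (P (idx a.1)) (Q a.2) < B := by
    intro a ha
    have : d' (P (idx a.1)) (Q a.2) ≤ walkCost d' (subCurve P S) Q F := by
      apply le_foldr_max
      rw [List.mem_map]
      exact ⟨a, ha, rfl⟩
    rw [hFcost] at this
    exact lt_of_le_of_lt this hcB
  have hε6 : (0:ℝ) < 1 - ε / 6 := by linarith
  -- distances from matched simplification vertices
  have hdistB : ∀ a ∈ F, dist (P (idx a.1)) (Q a.2) ≤ (1 + ε) * ρ - μ := by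
    intro a ha
    have h1 := (hd (P (idx a.1)) (Q a.2)).1
    have h2 := helem a ha
    rw [hB] at h2
    nlinarith [dist_nonneg (x := P (idx a.1)) (y := Q a.2)]
  -- the expanded walk
  have hwalk : IsWalk n m (expand idx F) := by
    refine ⟨expand_ne_nil idx hFne, ?_, ?_, chain'_expand idx hmono hFchain hF1, ?_⟩
    · rw [head?_expand, hFhead]
      simp [hidx0]
    · rw [getLast?_expand, hFlast]
      simp [hidxlast]
    · intro p hp
      obtain ⟨a, ha, h1, h2⟩ := mem_expand idx hmono hFchain hF1 hp
      constructor
      · rcases h2 with h2 | ⟨hl, _, h3⟩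
        · rw [h2]; exact hidxlt _ (hF1 a ha)
        · exact lt_trans h3 (hidxlt _ hl)
      · rw [h1]; exact (hFbnd a ha).2
  refine le_trans (csInf_le ⟨0, fun c hc => by obtain ⟨F', _, rfl⟩ := hc; exact foldr_max_nonneg _⟩
    ⟨expand idx F, hwalk, rfl⟩) ?_
  · -- cost bound
    apply foldr_max_le (by nlinarith)
    intro x hx
    rw [List.mem_map] at hx
    obtain ⟨p, hp, rfl⟩ := hx
    obtain ⟨a, ha, h1, h2⟩ := mem_expand idx hmono hFchain hF1 hp
    have hkey : dist (P p.1) (P (idx a.1)) ≤ μ := by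
      rcases h2 with h2 | ⟨hl, h3, h4⟩
      · rw [h2]; simpa using hμ0
      · rw [dist_comm]
        calc dist (P (idx a.1)) (P p.1)
            ≤ ∑ k ∈ Finset.Ico (idx a.1) p.1, dist (P k) (P (k + 1)) :=
              dist_le_arcLen P (by omega)
          _ ≤ μ := harc a.1 hl p.1 h3 h4
    calc dist (P p.1) (Q p.2) ≤ dist (P p.1) (P (idx a.1)) + dist (P (idx a.1)) (Q p.2) :=
          dist_triangle _ _ _
      _ ≤ μ + ((1 + ε) * ρ - μ) := by
          refine add_le_add hkey ?_
          rw [h1]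
          exact hdistB a ha
      _ = (1 + ε) * ρ := by ring

end Frechet
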